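/- Under the separable least-squares model assumptions, suppose B ⊆ Ω × ℝ^d is a convex set containing θ* = (x*, y*) on which the loss L is α-strongly convex for some α > 0 (i.e., ⟨H(θ)u, u⟩ ≥ α‖u‖² for all θ ∈ B and u ∈ ℝ^{p+d}), and suppose θ̂ = (x̂, ŷ) ∈ B is a critical point of L (∇L(θ̂) = 0). Then ‖θ̂ − θ*‖ ≤ ‖J(θ*)ᵀ w‖ / α, and consequently ρ(θ̂, θ*) ≤ √((σ₂‖y*‖ + σ₁)² + σ₁²) · ‖J(θ*)ᵀ w‖ / α. -/

import Mathlib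

/-!
STATEMENT 5: Stability of least-squares recovery.

The parameter space is `ThetaSpace p d = WithLp 2 (ℝ^p ×ₗ² ℝ^d)` (Euclidean norm on the
concatenation).  `J(θ*)ᵀ w` is modelled as the adjoint of the Fréchet derivative of the
residual at `θ*` applied to `w`.
-/

noncomputable section

abbrev EucSp (n : ℕ) : Type := EuclideanSpace ℝ (Fin n)

abbrev ThetaSpace (p d : ℕ) : Type := WithLp 2 (EucSp p × EucSp d)

def thX {p d : ℕ} (θ : ThetaSpace p d) : EucSp p := (WithLp.equiv 2 (EucSp p × EucSp d) θ).1

def thY {p d : ℕ} (θ : ThetaSpace p d) : EucSp d := (WithLp.equiv 2 (EucSp p × EucSp d) θ).2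

def thMk {p d : ℕ} (x : EucSp p) (y : EucSp d) : ThetaSpace p d :=
  (WithLp.equiv 2 (EucSp p × EucSp d)).symm (x, y)

/-- The residual `r(θ) = z − A(x) y` of the separable model. -/
def resid {p d N : ℕ} (A : EucSp p → (EucSp d →L[ℝ] EucSp N)) (z : EucSp N)
    (θ : ThetaSpace p d) : EucSp N :=
  z - A (thX θ) (thY θ)

/-- The separable least-squares loss `L(θ) = ½‖z − A(x)y‖²`. -/
def loss {p d N : ℕ} (A : EucSp p → (EucSp d →L[ℝ] EucSp N)) (z : EucSp N)
    (θ : ThetaSpace p d) : ℝ :=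
  (1 / 2) * ‖z - A (thX θ) (thY θ)‖ ^ 2

/-- The Hessian `H(θ) = ∇²L(θ)` of the loss, as a (continuous) bilinear form. -/
def hess {p d N : ℕ} (A : EucSp p → (EucSp d →L[ℝ] EucSp N)) (z : EucSp N)
    (θ : ThetaSpace p d) : ThetaSpace p d →L[ℝ] ThetaSpace p d →L[ℝ] ℝ :=
  fderiv ℝ (fderiv ℝ (loss A z)) θ

set_option maxHeartbeats 1000000 in
set_option synthInstance.maxHeartbeats 400000 in
/-- **Stability of least-squares recovery.**  If `L` is `α`-strongly convex on a convex set `B`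
containing `θ*` and `θ̂ ∈ B` is a critical point of `L`, then
`‖θ̂ − θ*‖ ≤ ‖J(θ*)ᵀ w‖/α` and
`ρ(θ̂, θ*) ≤ √((σ₂‖y*‖ + σ₁)² + σ₁²)·‖J(θ*)ᵀ w‖/α`. -/
theorem stability_of_least_squares
    {p d N : ℕ}
    (Ω : Set (EucSp p)) (hΩconv : Convex ℝ Ω) (hΩcomp : IsCompact Ω)
    (A : EucSp p → (EucSp d →L[ℝ] EucSp N)) (hA : ContDiff ℝ 3 A)
    (σ0 σ1 σ2 σ3 : ℝ)
    (hσ0 : ∀ x ∈ Ω, ‖A x‖ ≤ σ0)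
    (hσ1 : ∀ x ∈ Ω, ‖iteratedFDeriv ℝ 1 A x‖ ≤ σ1)
    (hσ2 : ∀ x ∈ Ω, ‖iteratedFDeriv ℝ 2 A x‖ ≤ σ2)
    (hσ3 : ∀ x ∈ Ω, ‖iteratedFDeriv ℝ 3 A x‖ ≤ σ3)
    (xs : EucSp p) (hxs : xs ∈ Ω) (ys : EucSp d) (w : EucSp N)
    -- the convex set B ⊆ Ω × ℝ^d containing θ*, on which L is α-strongly convex
    (B : Set (ThetaSpace p d)) (hBconv : Convex ℝ B)
    (hBΩ : ∀ θ ∈ B, thX θ ∈ Ω)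
    (hθsB : thMk xs ys ∈ B)
    (α : ℝ) (hα : 0 < α)
    (hsc : ∀ θ ∈ B, ∀ u : ThetaSpace p d,
      α * ‖u‖ ^ 2 ≤ hess A (A xs ys + w) θ u u)
    -- the critical point θ̂ ∈ B
    (θhat : ThetaSpace p d) (hθhatB : θhat ∈ B)
    (hcrit : fderiv ℝ (loss A (A xs ys + w)) θhat = 0) :
    ‖θhat - thMk xs ys‖
        ≤ ‖ContinuousLinearMap.adjoint (fderiv ℝ (resid A (A xs ys + w)) (thMk xs ys)) w‖ / α ∧
      (σ2 * ‖ys‖ + σ1) * ‖thX θhat - xs‖ + σ1 * ‖thY θhat - ys‖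
        ≤ Real.sqrt ((σ2 * ‖ys‖ + σ1) ^ 2 + σ1 ^ 2) *
            ‖ContinuousLinearMap.adjoint (fderiv ℝ (resid A (A xs ys + w)) (thMk xs ys)) w‖ / α := by
  set z : EucSp N := A xs ys + w with hzdef
  set θs : ThetaSpace p d := thMk xs ys with hθsdef
  set u : ThetaSpace p d := θhat - θs with hudef
  set aw : ThetaSpace p d :=
    ContinuousLinearMap.adjoint (fderiv ℝ (resid A z) θs) w with hawdef
  -- smoothness of the residual and the loss
  have hresid : ContDiff ℝ 3 (resid A z) := by
    have hX : ContDiff ℝ 3 (fun θ : ThetaSpace p d => thX θ) :=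
      ((ContinuousLinearMap.fst ℝ (EucSp p) (EucSp d)).comp
        (WithLp.prodContinuousLinearEquiv 2 ℝ (EucSp p) (EucSp d)).toContinuousLinearMap).contDiff
    have hY : ContDiff ℝ 3 (fun θ : ThetaSpace p d => thY θ) :=
      ((ContinuousLinearMap.snd ℝ (EucSp p) (EucSp d)).comp
        (WithLp.prodContinuousLinearEquiv 2 ℝ (EucSp p) (EucSp d)).toContinuousLinearMap).contDiff
    exact contDiff_const.sub ((hA.comp hX).clm_apply hY)
  have hloss : ContDiff ℝ 3 (loss A z) := by
    have : ContDiff ℝ 3 (fun θ : ThetaSpace p d => (1/2 : ℝ) * ‖resid A z θ‖ ^ 2) :=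
      contDiff_const.mul (hresid.norm_sq (𝕜 := ℝ))
    exact this
  -- the gradient map is C¹
  have hg : ContDiff ℝ 2 (fderiv ℝ (loss A z)) :=
    hloss.fderiv_right (by norm_num)
  -- derivative of the line and of φ
  have hline : ∀ t : ℝ, HasDerivAt (fun t : ℝ => θs + t • u) u t := by
    intro t
    simpa using ((hasDerivAt_id t).smul_const u).const_add θs
  have hφ : ∀ t : ℝ,
      HasDerivAt (fun t : ℝ => fderiv ℝ (loss A z) (θs + t • u) u)
        (hess A z (θs + t • u) u u) t := by
    intro t
    have h1 : HasFDerivAt (fderiv ℝ (loss A z)) (hess A z (θs + t • u)) (θs + t • u) :=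
      ((hg.differentiable (by norm_num)) (θs + t • u)).hasFDerivAt
    have h2 : HasDerivAt (fun s : ℝ => fderiv ℝ (loss A z) (θs + s • u))
        (hess A z (θs + t • u) u) t := h1.comp_hasDerivAt t (hline t)
    have h3 := h2.clm_apply (hasDerivAt_const t u)
    simpa using h3
  -- segment stays in B
  have hmem : ∀ t ∈ Set.Icc (0:ℝ) 1, θs + t • u ∈ B := by
    intro t ht
    have : θs + t • u = (1 - t) • θs + t • θhat := by
      rw [hudef]; module
    rw [this]
    exact hBconv hθsB hθhatB (by linarith [ht.2]) ht.1 (by ring)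
  -- mean value theorem
  obtain ⟨c, hc, hceq⟩ := exists_hasDerivAt_eq_slope
    (fun t : ℝ => fderiv ℝ (loss A z) (θs + t • u) u)
    (fun t : ℝ => hess A z (θs + t • u) u u) one_pos
    (fun t _ => (hφ t).continuousAt.continuousWithinAt)
    (fun t _ => hφ t)
  have hkey : α * ‖u‖ ^ 2 ≤
      fderiv ℝ (loss A z) (θs + (1:ℝ) • u) u - fderiv ℝ (loss A z) (θs + (0:ℝ) • u) u := by
    have hmemc : θs + c • u ∈ B := hmem c ⟨le_of_lt hc.1, le_of_lt hc.2⟩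
    have := hsc _ hmemc u
    rw [hceq] at this
    simpa using this
  have h1eq : θs + (1:ℝ) • u = θhat := by rw [hudef]; module
  have h0eq : θs + (0:ℝ) • u = θs := by module
  rw [h1eq, h0eq, hcrit] at hkey
  simp only [ContinuousLinearMap.zero_apply, zero_sub] at hkey
  -- the gradient at θs
  have hRd : HasFDerivAt (resid A z) (fderiv ℝ (resid A z) θs) θs :=
    ((hresid.differentiable (by norm_num)) θs).hasFDerivAt
  have hLd : HasFDerivAt (loss A z)
      ((1/2 : ℝ) • (2 • (innerSL ℝ (resid A z θs)).comp (fderiv ℝ (resid A z) θs))) θs :=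
    hRd.norm_sq.const_mul (1/2 : ℝ)
  have hrθs : resid A z θs = w := by
    simp only [resid, hθsdef]
    have hx : thX (thMk xs ys) = xs := rfl
    have hy : thY (thMk xs ys) = ys := rfl
    rw [hx, hy, hzdef]
    abel
  have hφ0 : fderiv ℝ (loss A z) θs u = inner ℝ aw u := by
    haveI : ContinuousSMul ℝ (ThetaSpace p d) := inferInstance
    rw [hLd.fderiv]
    have : ((1/2 : ℝ) • (2 • (innerSL ℝ (resid A z θs)).comp (fderiv ℝ (resid A z) θs))) u
        = inner ℝ (resid A z θs) (fderiv ℝ (resid A z) θs u) := by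
      simp [two_smul]
      ring
    rw [this, hrθs, hawdef]
    rw [ContinuousLinearMap.adjoint_inner_left]
  rw [hφ0] at hkey
  -- part 1
  have hawn : (0:ℝ) ≤ ‖aw‖ := norm_nonneg _
  have hbound : α * ‖u‖ ^ 2 ≤ ‖aw‖ * ‖u‖ := by
    have h1 : -(inner ℝ aw u : ℝ) ≤ ‖aw‖ * ‖u‖ := by
      have := abs_real_inner_le_norm aw u
      have h2 := neg_abs_le (inner ℝ aw u : ℝ)
      linarith
    linarith
  have part1 : ‖u‖ ≤ ‖aw‖ / α := by
    rcases eq_or_lt_of_le (norm_nonneg u) with h0 | h0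
    · rw [← h0]
      positivity
    · have h2 : (α * ‖u‖) * ‖u‖ ≤ ‖aw‖ * ‖u‖ := by
        have := hbound; rw [pow_two] at this; linarith [mul_assoc α ‖u‖ ‖u‖]
      have h3 : α * ‖u‖ ≤ ‖aw‖ := le_of_mul_le_mul_right h2 h0
      rw [le_div_iff₀ hα, mul_comm]
      exact h3
  refine ⟨part1, ?_⟩
  -- part 2
  have hσ1n : (0:ℝ) ≤ σ1 := le_trans (norm_nonneg _) (hσ1 xs hxs)
  have hσ2n : (0:ℝ) ≤ σ2 := le_trans (norm_nonneg _) (hσ2 xs hxs)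
  set a : ℝ := σ2 * ‖ys‖ + σ1 with hadef
  have han : (0:ℝ) ≤ a := by positivity
  set cx : ℝ := ‖thX θhat - xs‖ with hcxdef
  set cy : ℝ := ‖thY θhat - ys‖ with hcydef
  have hnorm : ‖u‖ ^ 2 = cx ^ 2 + cy ^ 2 := by
    have h1 : thX θhat - xs = thX u := rfl
    have h2 : thY θhat - ys = thY u := rfl
    rw [hcxdef, hcydef, h1, h2]
    exact WithLp.prod_norm_sq_eq_of_L2 u
  have hsqrt : Real.sqrt (cx ^ 2 + cy ^ 2) = ‖u‖ := by
    rw [← hnorm, Real.sqrt_sq (norm_nonneg u)]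
  have hcauchy : a * cx + σ1 * cy ≤ Real.sqrt (a ^ 2 + σ1 ^ 2) * Real.sqrt (cx ^ 2 + cy ^ 2) := by
    set s : ℝ := Real.sqrt (a ^ 2 + σ1 ^ 2) with hsdef
    set t : ℝ := Real.sqrt (cx ^ 2 + cy ^ 2) with htdef
    have hs2 : s ^ 2 = a ^ 2 + σ1 ^ 2 := Real.sq_sqrt (by positivity)
    have ht2 : t ^ 2 = cx ^ 2 + cy ^ 2 := Real.sq_sqrt (by positivity)
    have hsn : 0 ≤ s := Real.sqrt_nonneg _
    have htn : 0 ≤ t := Real.sqrt_nonneg _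
    have hcxn : 0 ≤ cx := norm_nonneg _
    have hcyn : 0 ≤ cy := norm_nonneg _
    nlinarith [sq_nonneg (a * cy - σ1 * cx), sq_nonneg (s * t - (a * cx + σ1 * cy)),
      mul_nonneg hsn htn, mul_nonneg (mul_nonneg han hcxn) (mul_nonneg hσ1n hcyn)]
  calc a * cx + σ1 * cy
      ≤ Real.sqrt (a ^ 2 + σ1 ^ 2) * Real.sqrt (cx ^ 2 + cy ^ 2) := hcauchy
    _ = Real.sqrt (a ^ 2 + σ1 ^ 2) * ‖u‖ := by rw [hsqrt]
    _ ≤ Real.sqrt (a ^ 2 + σ1 ^ 2) * (‖aw‖ / α) := by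
        exact mul_le_mul_of_nonneg_left part1 (Real.sqrt_nonneg _)
    _ = Real.sqrt (a ^ 2 + σ1 ^ 2) * ‖aw‖ / α := by ring
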